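/- Let V be finite-dimensional, R(x) ∈ End(V ⊗ V) invertible with R(x)^{t₁} invertible, K⁻(x), K'(x) ∈ End(V), M ∈ GL(V), r ∈ ℂ^×, z ∈ (ℂ^×)^N. Assume crossing symmetry M₂^{-1} R_{12}(r²x)^{-1} M₂ ∝ R̃_{12}(x) and [R(x), M ⊗ M] = 0, and assume K'(±r^{-1}) ∝ M. Define 𝒯(x;z) := Tr₀ [K'₀(x) R_{01}(1/(xz₁))^{-1} ⋯ R_{0N}(1/(xz_N))^{-1} K⁻₀(x) R_{0N}(x/z_N) ⋯ R_{01}(x/z₁)]. Then 𝒯(±r^{-1}; z) ∝ (Tr(K⁻(±r^{-1}) M)) · Id_{V^{⊗N}}. -/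

import Mathlib

open Matrix Kronecker

noncomputable section

abbrev MatV (n : ℕ) := Matrix (Fin n) (Fin n) ℂ
abbrev Sq (n : ℕ) := Matrix (Fin n × Fin n) (Fin n × Fin n) ℂ

/-- The flip operator `P` on `V ⊗ V`. -/
def flipM (n : ℕ) : Sq n := Matrix.of fun p q => if p.1 = q.2 ∧ p.2 = q.1 then (1 : ℂ) else 0

/-- `R₂₁ = P R P`. -/
def swapM {n : ℕ} (R : Sq n) : Sq n := Matrix.of fun p q => R (p.2, p.1) (q.2, q.1)

/-- Partial transpose in the first tensor factor. -/
def pt1 {n : ℕ} (R : Sq n) : Sq n := Matrix.of fun p q => R (q.1, p.2) (p.1, q.2)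

/-- `R̃ = ((R^{t₁})⁻¹)^{t₁}`. -/
def rtil {n : ℕ} (R : Sq n) : Sq n := pt1 (pt1 R)⁻¹

/-- `K ⊗ Id` acting in the first factor. -/
def k1M {n : ℕ} (K : MatV n) : Sq n := Matrix.of fun p q => if p.2 = q.2 then K p.1 q.1 else 0

/-- `Id ⊗ K` acting in the second factor. -/
def k2M {n : ℕ} (K : MatV n) : Sq n := Matrix.of fun p q => if p.1 = q.1 then K p.2 q.2 else 0

/-- Partial trace over the first tensor factor. -/
def ptr0 {n : ℕ} (X : Sq n) : MatV n := Matrix.of fun i j => ∑ a : Fin n, X (a, i) (a, j)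

/-- `φ_R(Y)(x) = Tr₀ (Y₀(x) P₀₁ R₀₁(x²))`. -/
def phiR {n : ℕ} (R : ℂ → Sq n) (K : ℂ → MatV n) : ℂ → MatV n :=
  fun x => ptr0 (k1M (K x) * flipM n * R (x ^ 2))

abbrev Cu (n : ℕ) := Matrix (Fin n × Fin n × Fin n) (Fin n × Fin n × Fin n) ℂ

def e12 {n : ℕ} (R : Sq n) : Cu n :=
  Matrix.of fun p q => if p.2.2 = q.2.2 then R (p.1, p.2.1) (q.1, q.2.1) else 0
def e13 {n : ℕ} (R : Sq n) : Cu n :=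
  Matrix.of fun p q => if p.2.1 = q.2.1 then R (p.1, p.2.2) (q.1, q.2.2) else 0
def e23 {n : ℕ} (R : Sq n) : Cu n :=
  Matrix.of fun p q => if p.1 = q.1 then R (p.2.1, p.2.2) (q.2.1, q.2.2) else 0

/-- The Yang–Baxter equation `R₁₂(x/y) R₁₃(x) R₂₃(y) = R₂₃(y) R₁₃(x) R₁₂(x/y)`. -/
def YBEprop {n : ℕ} (R : ℂ → Sq n) : Prop :=
  ∀ x y : ℂ, e12 (R (x / y)) * e13 (R x) * e23 (R y) = e23 (R y) * e13 (R x) * e12 (R (x / y))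

/-- The left reflection equation. -/
def LREprop {n : ℕ} (R : ℂ → Sq n) (K : ℂ → MatV n) : Prop :=
  ∀ x y : ℂ, R (x / y) * k1M (K x) * swapM (R (x * y)) * k2M (K y)
    = k2M (K y) * R (x * y) * k1M (K x) * swapM (R (x / y))

/-- The right reflection equation. -/
def RREprop {n : ℕ} (R : ℂ → Sq n) (K : ℂ → MatV n) : Prop :=
  ∀ x y : ℂ, swapM (R (x / y)) * k1M (K x) * R (x * y) * k2M (K y)
    = k2M (K y) * swapM (R (x * y)) * k1M (K x) * R (x / y)

/-- The dual reflection equation. -/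
def DREprop {n : ℕ} (R : ℂ → Sq n) (K : ℂ → MatV n) : Prop :=
  ∀ x y : ℂ, (R (x / y))⁻¹ * k1M (K x) * swapM (rtil (R (x * y))) * k2M (K y)
    = k2M (K y) * rtil (R (x * y)) * k1M (K x) * ((swapM (R (x / y)))⁻¹)ᵀ

abbrev StM (n N : ℕ) := Matrix (Fin N → Fin n) (Fin N → Fin n) ℂ
abbrev BigM (n N : ℕ) := Matrix (Fin n × (Fin N → Fin n)) (Fin n × (Fin N → Fin n)) ℂ

/-- `K` acting in the auxiliary factor `0`. -/
def aux0 {n N : ℕ} (K : MatV n) : BigM n N :=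
  Matrix.of fun p q => if p.2 = q.2 then K p.1 q.1 else 0

/-- A two-site operator acting in the auxiliary factor `0` and site `j`. -/
def aux0J {n N : ℕ} (j : Fin N) (R : Sq n) : BigM n N :=
  Matrix.of fun p q =>
    if ∀ l, l ≠ j → p.2 l = q.2 l then R (p.1, p.2 j) (q.1, q.2 j) else 0

/-- `K` acting at site `j` of the state space `V^{⊗N}`. -/
def siteK {n N : ℕ} (j : Fin N) (K : MatV n) : StM n N :=
  Matrix.of fun p q => if ∀ l, l ≠ j → p l = q l then K (p j) (q j) else 0

/-- A two-site operator acting at sites `j` and `k` of `V^{⊗N}`. -/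
def siteJK {n N : ℕ} (j k : Fin N) (R : Sq n) : StM n N :=
  Matrix.of fun p q =>
    if ∀ l, l ≠ j → l ≠ k → p l = q l then R (p j, p k) (q j, q k) else 0

/-- Partial trace over the auxiliary factor. -/
def ptrA {n N : ℕ} (X : BigM n N) : StM n N :=
  Matrix.of fun p q => ∑ a : Fin n, X (a, p) (a, q)

/-- Descending ordered product `f(k-1) * ⋯ * f(0)`. -/
def pdesc {M : Type*} [Monoid M] {k : ℕ} (f : Fin k → M) : M := ((List.ofFn f).reverse).prod

/-- Ascending ordered product `f(0) * ⋯ * f(k-1)`. -/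
def pasc {M : Type*} [Monoid M] {k : ℕ} (f : Fin k → M) : M := (List.ofFn f).prod

/-- Inhomogeneous boundary transfer matrix
`𝒯(x;z) = Tr₀ [K'₀(x) R₀₁(1/(xz₁))⁻¹ ⋯ R₀N(1/(xz_N))⁻¹ K⁻₀(x) R₀N(x/z_N) ⋯ R₀₁(x/z₁)]`. -/
def Tbdy {n N : ℕ} (R : ℂ → Sq n) (Kpr Km : ℂ → MatV n) (z : Fin N → ℂ) (x : ℂ) : StM n N :=
  ptrA (aux0 (Kpr x)
    * pasc (fun i => (aux0J i (R ((x * z i)⁻¹)))⁻¹)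
    * aux0 (Km x)
    * pdesc fun i => aux0J i (R (x / z i)))

/-- Boundary qKZ transport matrix at `p = 1`:
`𝒜_i(z) = R_{i,i-1}(z_i/z_{i-1}) ⋯ R_{i1}(z_i/z₁) K⁺_i(z_i) R_{1i}(z₁z_i) ⋯ R_{i-1,i}(z_{i-1}z_i)
  R_{i+1,i}(z_{i+1}z_i) ⋯ R_{Ni}(z_Nz_i) K⁻_i(z_i) R_{Ni}(z_N/z_i)⁻¹ ⋯ R_{i+1,i}(z_{i+1}/z_i)⁻¹`. -/
def Abdy {n N : ℕ} (R : ℂ → Sq n) (Kp Km : ℂ → MatV n) (z : Fin N → ℂ) (i : Fin N) : StM n N :=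
  pdesc (fun j : Fin i.1 =>
      siteJK i ⟨j.1, j.isLt.trans i.isLt⟩ (R (z i / z ⟨j.1, j.isLt.trans i.isLt⟩)))
  * siteK i (Kp (z i))
  * pasc (fun j : Fin i.1 =>
      siteJK ⟨j.1, j.isLt.trans i.isLt⟩ i (R (z ⟨j.1, j.isLt.trans i.isLt⟩ * z i)))
  * pasc (fun k : Fin (N - (i.1 + 1)) =>
      siteJK ⟨i.1 + 1 + k.1, by have := k.isLt; omega⟩ i
        (R (z ⟨i.1 + 1 + k.1, by have := k.isLt; omega⟩ * z i)))
  * siteK i (Km (z i))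
  * pdesc (fun k : Fin (N - (i.1 + 1)) =>
      (siteJK ⟨i.1 + 1 + k.1, by have := k.isLt; omega⟩ i
        (R (z ⟨i.1 + 1 + k.1, by have := k.isLt; omega⟩ / z i)))⁻¹)

section Aux
variable {n N : ℕ}

open Function in
lemma sum_off (j : Fin N) (p : Fin N → Fin n) (f : (Fin N → Fin n) → ℂ) :
    ∑ m : Fin N → Fin n, (if ∀ l, l ≠ j → p l = m l then f m else 0)
      = ∑ u : Fin n, f (Function.update p j u) := by
  classical
  rw [← Finset.sum_filter]
  apply Finset.sum_nbij' (fun m => m j) (fun u => Function.update p j u)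
  · intro a _; exact Finset.mem_univ _
  · intro u _
    simp only [Finset.mem_filter, Finset.mem_univ, true_and]
    intro l hl
    rw [Function.update_of_ne hl]
  · intro m hm
    simp only [Finset.mem_filter, Finset.mem_univ, true_and] at hm
    funext l
    by_cases hl : l = j
    · subst hl; simp
    · rw [Function.update_of_ne hl]; exact hm l hl
  · intro u _; simp
  · intro m hm
    simp only [Finset.mem_filter, Finset.mem_univ, true_and] at hm
    congr 1
    funext l
    by_cases hl : l = j
    · subst hl; simp
    · rw [Function.update_of_ne hl]; exact (hm l hl).symm

lemma sum_off' (j : Fin N) (q : Fin N → Fin n) (f : (Fin N → Fin n) → ℂ) :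
    ∑ m : Fin N → Fin n, (if ∀ l, l ≠ j → m l = q l then f m else 0)
      = ∑ u : Fin n, f (Function.update q j u) := by
  rw [← sum_off j q f]
  apply Finset.sum_congr rfl
  intro m _
  congr 1
  simp only [eq_iff_iff]
  constructor <;> intro h l hl <;> exact (h l hl).symm

end Aux
section Aux2
variable {n N : ℕ}

lemma update_cond_iff (j : Fin N) (p q : Fin N → Fin n) (u : Fin n) :
    (∀ l, l ≠ j → Function.update p j u l = q l) ↔ (∀ l, l ≠ j → p l = q l) := by
  constructor <;> intro h l hl
  · rw [← h l hl, Function.update_of_ne hl]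
  · rw [Function.update_of_ne hl]; exact h l hl

lemma eq_of_cond (j : Fin N) {p q : Fin N → Fin n} (h : ∀ l, l ≠ j → p l = q l)
    (hj : p j = q j) : p = q := by
  funext l
  by_cases hl : l = j
  · subst hl; exact hj
  · exact h l hl

lemma aux0J_mul (j : Fin N) (A B : Sq n) :
    aux0J (N := N) j (A * B) = aux0J j A * aux0J j B := by
  ext ⟨a, p⟩ ⟨c, q⟩
  simp only [aux0J, Matrix.mul_apply, Matrix.of_apply, Fintype.sum_prod_type, ite_mul, zero_mul]
  simp only [sum_off j p, Function.update_self, update_cond_iff, mul_ite, mul_zero]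
  by_cases h : ∀ l, l ≠ j → p l = q l
  · simp [h]
  · simp [h]

lemma aux0J_one (j : Fin N) : aux0J (N := N) j (1 : Sq n) = 1 := by
  ext ⟨a, p⟩ ⟨c, q⟩
  simp only [aux0J, Matrix.of_apply, Matrix.one_apply, Prod.mk.injEq]
  by_cases hpq : p = q
  · subst hpq
    by_cases hac : a = c <;> simp [hac]
  · have h1 : ¬(a = c ∧ p = q) := fun h => hpq h.2
    rw [if_neg h1]
    by_cases hc : ∀ l, l ≠ j → p l = q l
    · have hj : ¬ p j = q j := fun hj => hpq (eq_of_cond j hc hj)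
      simp [hc, hj]
    · simp [hc]

lemma aux0J_smul (j : Fin N) (c : ℂ) (A : Sq n) :
    aux0J (N := N) j (c • A) = c • aux0J j A := by
  ext ⟨a, p⟩ ⟨b, q⟩
  simp only [aux0J, Matrix.of_apply, Matrix.smul_apply, smul_eq_mul, mul_ite, mul_zero]

lemma aux0_mul (A B : MatV n) : aux0 (N := N) (A * B) = aux0 A * aux0 B := by
  ext ⟨a, p⟩ ⟨c, q⟩
  simp only [aux0, Matrix.mul_apply, Matrix.of_apply, Fintype.sum_prod_type, ite_mul, zero_mul,
    mul_ite, mul_zero]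
  simp only [Finset.sum_ite_eq, Finset.sum_ite_eq', Finset.mem_univ, if_true]
  by_cases h : p = q
  · subst h; simp
  · simp [h]

lemma aux0_smul (c : ℂ) (A : MatV n) : aux0 (N := N) (c • A) = c • aux0 A := by
  ext ⟨a, p⟩ ⟨b, q⟩
  simp only [aux0, Matrix.of_apply, Matrix.smul_apply, smul_eq_mul, mul_ite, mul_zero]

lemma aux0_one : aux0 (N := N) (1 : MatV n) = 1 := by
  ext ⟨a, p⟩ ⟨b, q⟩
  simp only [aux0, Matrix.of_apply, Matrix.one_apply, Prod.mk.injEq]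
  by_cases h : p = q <;> by_cases hab : a = b <;> simp [h, hab]

lemma aux0J_k1M (j : Fin N) (K : MatV n) : aux0J (N := N) j (k1M K) = aux0 K := by
  ext ⟨a, p⟩ ⟨b, q⟩
  simp only [aux0J, k1M, aux0, Matrix.of_apply]
  by_cases h : p = q
  · subst h; simp
  · by_cases h1 : ∀ l, l ≠ j → p l = q l
    · have h2 : ¬ p j = q j := fun h2 => h (eq_of_cond j h1 h2)
      simp [h1, h2, h]
    · simp [h1, h]

end Aux2
section Aux3
variable {n : ℕ}

lemma sum2L {α β : Type*} [Fintype α] [Fintype β] [DecidableEq α] (c : α) (f : α → β → ℂ) :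
    ∑ x : α, ∑ y : β, (if x = c then f x y else 0) = ∑ y, f c y := by
  rw [Finset.sum_comm]
  simp [Finset.sum_ite_eq']

lemma sum2L' {α β : Type*} [Fintype α] [Fintype β] [DecidableEq α] (c : α) (f : α → β → ℂ) :
    ∑ x : α, ∑ y : β, (if c = x then f x y else 0) = ∑ y, f c y := by
  rw [Finset.sum_comm]
  simp [Finset.sum_ite_eq]

lemma k1M_mul (A B : MatV n) : k1M (A * B) = k1M A * k1M B := by
  ext ⟨a, p⟩ ⟨c, q⟩
  simp only [k1M, Matrix.mul_apply, Matrix.of_apply, Fintype.sum_prod_type, ite_mul, zero_mul,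
    mul_ite, mul_zero]
  simp only [sum2L, sum2L', Finset.sum_ite_eq, Finset.sum_ite_eq', Finset.mem_univ, if_true]
  by_cases h : p = q <;> simp [h]

lemma k2M_mul (A B : MatV n) : k2M (A * B) = k2M A * k2M B := by
  ext ⟨a, p⟩ ⟨c, q⟩
  simp only [k2M, Matrix.mul_apply, Matrix.of_apply, Fintype.sum_prod_type, ite_mul, zero_mul,
    mul_ite, mul_zero]
  simp only [sum2L, sum2L', Finset.sum_ite_eq, Finset.sum_ite_eq', Finset.mem_univ, if_true]
  by_cases h : a = c <;> simp [h]

lemma k1M_one : k1M (1 : MatV n) = 1 := by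
  ext ⟨a, p⟩ ⟨c, q⟩
  simp only [k1M, Matrix.of_apply, Matrix.one_apply, Prod.mk.injEq]
  by_cases h : p = q <;> by_cases h2 : a = c <;> simp [h, h2]

lemma k2M_one : k2M (1 : MatV n) = 1 := by
  ext ⟨a, p⟩ ⟨c, q⟩
  simp only [k2M, Matrix.of_apply, Matrix.one_apply, Prod.mk.injEq]
  by_cases h : p = q <;> by_cases h2 : a = c <;> simp [h, h2]

lemma k1M_k2M_comm (A B : MatV n) : k1M A * k2M B = k2M B * k1M A := by
  ext ⟨a, p⟩ ⟨c, q⟩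
  simp only [k1M, k2M, Matrix.mul_apply, Matrix.of_apply, Fintype.sum_prod_type, ite_mul,
    zero_mul, mul_ite, mul_zero]
  simp only [sum2L, sum2L', Finset.sum_ite_eq, Finset.sum_ite_eq', Finset.mem_univ, if_true]
  ring

lemma kron_eq_k1M_mul_k2M (A B : MatV n) : A ⊗ₖ B = k1M A * k2M B := by
  ext ⟨a, p⟩ ⟨c, q⟩
  simp only [k1M, k2M, Matrix.mul_apply, Matrix.of_apply, Fintype.sum_prod_type, ite_mul,
    zero_mul, mul_ite, mul_zero, Matrix.kroneckerMap_apply]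
  simp only [sum2L, sum2L', Finset.sum_ite_eq, Finset.sum_ite_eq', Finset.mem_univ, if_true]

-- if X has a right inverse equal lift, etc.
lemma isUnit_of_right (m : Type*) [Fintype m] [DecidableEq m] (A B : Matrix m m ℂ)
    (h : A * B = 1) : IsUnit A := by
  have := Matrix.det_mul A B
  rw [h, Matrix.det_one] at this
  rw [Matrix.isUnit_iff_isUnit_det]
  exact IsUnit.of_mul_eq_one _ this.symm

lemma k1M_isUnit {M : MatV n} (hM : IsUnit M) : IsUnit (k1M M) := by
  apply isUnit_of_right _ _ (k1M M⁻¹)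
  rw [← k1M_mul, Matrix.mul_nonsing_inv _ ((Matrix.isUnit_iff_isUnit_det _).mp hM), k1M_one]

lemma k2M_isUnit {M : MatV n} (hM : IsUnit M) : IsUnit (k2M M) := by
  apply isUnit_of_right _ _ (k2M M⁻¹)
  rw [← k2M_mul, Matrix.mul_nonsing_inv _ ((Matrix.isUnit_iff_isUnit_det _).mp hM), k2M_one]

lemma k1M_inv {M : MatV n} (hM : IsUnit M) : (k1M M)⁻¹ = k1M M⁻¹ := by
  apply Matrix.inv_eq_right_inv
  rw [← k1M_mul, Matrix.mul_nonsing_inv _ ((Matrix.isUnit_iff_isUnit_det _).mp hM), k1M_one]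

lemma k2M_inv {M : MatV n} (hM : IsUnit M) : (k2M M)⁻¹ = k2M M⁻¹ := by
  apply Matrix.inv_eq_right_inv
  rw [← k2M_mul, Matrix.mul_nonsing_inv _ ((Matrix.isUnit_iff_isUnit_det _).mp hM), k2M_one]

lemma pt1_mul_k1 (X : Sq n) (A : MatV n) : pt1 (X * k1M A) = k1M Aᵀ * pt1 X := by
  ext ⟨p1, p2⟩ ⟨q1, q2⟩
  simp only [pt1, k1M, Matrix.mul_apply, Matrix.of_apply, Fintype.sum_prod_type, ite_mul,
    zero_mul, mul_ite, mul_zero, Matrix.transpose_apply]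
  simp only [sum2L, sum2L', Finset.sum_ite_eq, Finset.sum_ite_eq', Finset.mem_univ, if_true]
  apply Finset.sum_congr rfl; intros; ring

lemma pt1_k1_mul (X : Sq n) (A : MatV n) : pt1 (k1M A * X) = pt1 X * k1M Aᵀ := by
  ext ⟨p1, p2⟩ ⟨q1, q2⟩
  simp only [pt1, k1M, Matrix.mul_apply, Matrix.of_apply, Fintype.sum_prod_type, ite_mul,
    zero_mul, mul_ite, mul_zero, Matrix.transpose_apply]
  simp only [sum2L, sum2L', Finset.sum_ite_eq, Finset.sum_ite_eq', Finset.mem_univ, if_true]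
  apply Finset.sum_congr rfl; intros; ring

lemma pt1_mul_k2 (X : Sq n) (B : MatV n) : pt1 (X * k2M B) = pt1 X * k2M B := by
  ext ⟨p1, p2⟩ ⟨q1, q2⟩
  simp only [pt1, k2M, Matrix.mul_apply, Matrix.of_apply, Fintype.sum_prod_type, ite_mul,
    zero_mul, mul_ite, mul_zero]
  simp only [sum2L, sum2L', Finset.sum_ite_eq, Finset.sum_ite_eq', Finset.mem_univ, if_true]

lemma pt1_k2_mul (X : Sq n) (B : MatV n) : pt1 (k2M B * X) = k2M B * pt1 X := by
  ext ⟨p1, p2⟩ ⟨q1, q2⟩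
  simp only [pt1, k2M, Matrix.mul_apply, Matrix.of_apply, Fintype.sum_prod_type, ite_mul,
    zero_mul, mul_ite, mul_zero]
  simp only [sum2L, sum2L', Finset.sum_ite_eq, Finset.sum_ite_eq', Finset.mem_univ, if_true]

end Aux3
section Aux4
variable {n N : ℕ}

theorem comm_sw {Mo : Type*} [Monoid Mo] {U V X : Mo} (huv : U * V = 1) (hvu : V * U = 1)
    (h : X * V = V * X) : X * U = U * X := by
  calc X * U = U * (V * (X * U)) := by rw [← mul_assoc U V, huv, one_mul]
    _ = U * (X * (V * U)) := by rw [← mul_assoc V X, ← h, mul_assoc]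
    _ = U * X := by rw [hvu, mul_one]

theorem conj_sw {Mo : Type*} [Monoid Mo] {A Ai B Bi X : Mo} (hai : Ai * A = 1)
    (hbi : B * Bi = 1) (h : X * (A * B) = (A * B) * X) : B * X * Bi = Ai * (X * A) := by
  have k1 : A * (B * (X * Bi)) = X * A := by
    have e1 : A * (B * (X * Bi)) = ((A * B) * X) * Bi := by simp [mul_assoc]
    rw [e1, ← h]
    calc (X * (A * B)) * Bi = X * (A * (B * Bi)) := by simp [mul_assoc]
      _ = X * A := by rw [hbi, mul_one]
  calc B * X * Bi = Ai * (A * (B * (X * Bi))) := by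
        rw [← mul_assoc Ai A, hai, one_mul, mul_assoc]
    _ = Ai * (X * A) := by rw [k1]

lemma pt1_pt1 (X : Sq n) : pt1 (pt1 X) = X := by
  ext ⟨a, b⟩ ⟨c, d⟩
  rfl

lemma E1lem (M : MatV n) (R : Sq n) (hcomm : R * (k1M M * k2M M) = (k1M M * k2M M) * R) :
    k1M Mᵀ * pt1 R * k2M M = k2M M * pt1 R * k1M Mᵀ := by
  have h1 : pt1 (R * (k1M M * k2M M)) = k1M Mᵀ * pt1 R * k2M M := by
    rw [← mul_assoc, pt1_mul_k2, pt1_mul_k1]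
  have h2 : pt1 (k1M M * k2M M * R) = k2M M * pt1 R * k1M Mᵀ := by
    rw [mul_assoc, pt1_k1_mul, pt1_k2_mul]
  rw [← h1, ← h2, hcomm]

lemma isUnit_transpose {M : MatV n} (hM : IsUnit M) : IsUnit Mᵀ := by
  rw [Matrix.isUnit_iff_isUnit_det, Matrix.det_transpose]
  exact (Matrix.isUnit_iff_isUnit_det _).mp hM

lemma UV_one {M : MatV n} (hM : IsUnit M) :
    (k1M M * k2M M) * (k1M M⁻¹ * k2M M⁻¹) = 1 := by
  have hd := (Matrix.isUnit_iff_isUnit_det _).mp hM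
  calc (k1M M * k2M M) * (k1M M⁻¹ * k2M M⁻¹)
      = k1M M * (k2M M * k1M M⁻¹) * k2M M⁻¹ := by simp [mul_assoc]
    _ = k1M M * (k1M M⁻¹ * k2M M) * k2M M⁻¹ := by rw [k1M_k2M_comm]
    _ = (k1M M * k1M M⁻¹) * (k2M M * k2M M⁻¹) := by simp [mul_assoc]
    _ = 1 := by rw [← k1M_mul, ← k2M_mul, Matrix.mul_nonsing_inv _ hd, k1M_one, k2M_one, one_mul]

lemma rtil_comm_MM (M : MatV n) (hM : IsUnit M) (R : Sq n)
    (hcomm : R * (k1M M * k2M M) = (k1M M * k2M M) * R) :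
    rtil R * (k1M M * k2M M) = (k1M M * k2M M) * rtil R := by
  have hMT : IsUnit Mᵀ := isUnit_transpose hM
  have e1 := E1lem M R hcomm
  have e2 := congrArg Inv.inv e1
  rw [Matrix.mul_inv_rev, Matrix.mul_inv_rev, Matrix.mul_inv_rev, Matrix.mul_inv_rev,
    k1M_inv hMT, k2M_inv hM, ← Matrix.transpose_nonsing_inv] at e2
  have f1 : pt1 (k2M M⁻¹ * ((pt1 R)⁻¹ * k1M (M⁻¹)ᵀ)) = k2M M⁻¹ * (k1M M⁻¹ * rtil R) := by
    rw [pt1_k2_mul, pt1_mul_k1, Matrix.transpose_transpose, rtil]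
  have f2 : pt1 (k1M (M⁻¹)ᵀ * ((pt1 R)⁻¹ * k2M M⁻¹)) = rtil R * k2M M⁻¹ * k1M M⁻¹ := by
    rw [pt1_k1_mul, pt1_mul_k2, Matrix.transpose_transpose, rtil]
  have g : rtil R * (k1M M⁻¹ * k2M M⁻¹) = (k1M M⁻¹ * k2M M⁻¹) * rtil R := by
    have h3 := congrArg pt1 e2
    rw [f1, f2] at h3
    calc rtil R * (k1M M⁻¹ * k2M M⁻¹) = rtil R * (k2M M⁻¹ * k1M M⁻¹) := by rw [k1M_k2M_comm]
      _ = rtil R * k2M M⁻¹ * k1M M⁻¹ := by rw [mul_assoc]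
      _ = k2M M⁻¹ * (k1M M⁻¹ * rtil R) := h3.symm
      _ = (k2M M⁻¹ * k1M M⁻¹) * rtil R := by rw [mul_assoc]
      _ = (k1M M⁻¹ * k2M M⁻¹) * rtil R := by rw [k1M_k2M_comm]
  exact comm_sw (UV_one hM) (mul_eq_one_comm.mp (UV_one hM)) g

lemma conj_switch (M : MatV n) (hM : IsUnit M) (R : Sq n)
    (hcomm : R * (k1M M * k2M M) = (k1M M * k2M M) * R) :
    k2M M * rtil R * (k2M M)⁻¹ = k1M M⁻¹ * (rtil R * k1M M) := by
  have hd := (Matrix.isUnit_iff_isUnit_det _).mp hM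
  rw [k2M_inv hM]
  exact conj_sw
    (by rw [← k1M_mul, Matrix.nonsing_inv_mul _ hd, k1M_one])
    (by rw [← k2M_mul, Matrix.mul_nonsing_inv _ hd, k2M_one])
    (rtil_comm_MM M hM R hcomm)

end Aux4
section Aux5
variable {n N : ℕ}

lemma cross_comm {i j : Fin N} (hij : i ≠ j) (X : Sq n) (K : MatV n) :
    aux0J i X * aux0J j (k2M K) = aux0J j (k2M K) * aux0J i X := by
  ext ⟨a, p⟩ ⟨b, q⟩
  simp only [aux0J, k2M, Matrix.mul_apply, Matrix.of_apply, Fintype.sum_prod_type, ite_mul,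
    zero_mul, mul_ite, mul_zero]
  simp only [sum_off' j q, sum_off' i q]
  have hiffL : ∀ u : Fin n, (∀ l, l ≠ i → p l = Function.update q j u l) ↔
      (p j = u ∧ ∀ l, l ≠ i → l ≠ j → p l = q l) := by
    intro u
    constructor
    · intro h
      refine ⟨by rw [h j (Ne.symm hij), Function.update_self], fun l h1 h2 => ?_⟩
      rw [h l h1, Function.update_of_ne h2]
    · rintro ⟨hu, h⟩ l hl
      by_cases hlj : l = j
      · subst hlj; rw [Function.update_self]; exact hu
      · rw [Function.update_of_ne hlj]; exact h l hl hlj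
  have hiffR : ∀ u : Fin n, (∀ l, l ≠ j → p l = Function.update q i u l) ↔
      (p i = u ∧ ∀ l, l ≠ i → l ≠ j → p l = q l) := by
    intro u
    constructor
    · intro h
      refine ⟨by rw [h i hij, Function.update_self], fun l h1 h2 => ?_⟩
      rw [h l h2, Function.update_of_ne h1]
    · rintro ⟨hu, h⟩ l hl
      by_cases hli : l = i
      · subst hli; rw [Function.update_self]; exact hu
      · rw [Function.update_of_ne hli]; exact h l hli hl
  simp only [hiffL, hiffR, ite_and, Function.update_self,
    Function.update_of_ne hij, Function.update_of_ne (Ne.symm hij)]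
  simp only [Finset.sum_ite_irrel, Finset.sum_const_zero, Finset.sum_ite_eq, Finset.sum_ite_eq',
    Finset.mem_univ, if_true]
  split_ifs with hD
  · ring
  · rfl

end Aux5
section Aux6
variable {n N : ℕ}

def offS (j : Fin N) (Z : BigM n N) : Prop :=
  ∀ K : MatV n, Z * aux0J j (k2M K) = aux0J j (k2M K) * Z

lemma offS_mul {j : Fin N} {Z₁ Z₂ : BigM n N} (h1 : offS j Z₁) (h2 : offS j Z₂) :
    offS j (Z₁ * Z₂) := by
  intro K
  rw [mul_assoc, h2, ← mul_assoc, h1, mul_assoc]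

lemma offS_one {j : Fin N} : offS j (1 : BigM n N) := by
  intro K; rw [one_mul, mul_one]

lemma offS_aux0 {j : Fin N} (W : MatV n) : offS j (aux0 (N := N) W) := by
  intro K
  rw [← aux0J_k1M j W, ← aux0J_mul, ← aux0J_mul, k1M_k2M_comm]

lemma offS_aux0J {i j : Fin N} (hij : i ≠ j) (X : Sq n) : offS j (aux0J i X) :=
  fun K => cross_comm hij X K

lemma offS_prod {j : Fin N} (l : List (BigM n N)) (h : ∀ Z ∈ l, offS j Z) :
    offS j l.prod := by
  induction l with
  | nil => simpa using offS_one
  | cons a t ih =>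
    rw [List.prod_cons]
    exact offS_mul (h a List.mem_cons_self) (ih fun Z hZ => h Z (List.mem_cons_of_mem a hZ))

lemma mul_sjK_apply (j : Fin N) (Z : BigM n N) (K : MatV n) (a b : Fin n)
    (p q : Fin N → Fin n) :
    (Z * aux0J j (k2M K)) (a, p) (b, q)
      = ∑ u, Z (a, p) (b, Function.update q j u) * K u (q j) := by
  simp only [aux0J, k2M, Matrix.mul_apply, Matrix.of_apply, Fintype.sum_prod_type, mul_ite,
    mul_zero]
  simp only [sum_off' j q, Function.update_self]
  rw [Finset.sum_comm]
  simp only [Finset.sum_ite_eq', Finset.mem_univ, if_true]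

lemma sjK_mul_apply (j : Fin N) (Z : BigM n N) (K : MatV n) (a b : Fin n)
    (p q : Fin N → Fin n) :
    (aux0J j (k2M K) * Z) (a, p) (b, q)
      = ∑ u, K (p j) u * Z (a, Function.update p j u) (b, q) := by
  simp only [aux0J, k2M, Matrix.mul_apply, Matrix.of_apply, Fintype.sum_prod_type, ite_mul,
    zero_mul]
  simp only [sum_off j p, Function.update_self]
  rw [Finset.sum_comm]
  simp only [Finset.sum_ite_eq, Finset.sum_ite_eq', Finset.mem_univ, if_true]

lemma offS_entry {j : Fin N} {Z : BigM n N} (hZ : offS j Z) (a b : Fin n)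
    (p q : Fin N → Fin n) (v w : Fin n) :
    Z (a, Function.update p j v) (b, Function.update q j w)
      = if v = w then Z (a, p) (b, Function.update q j (p j)) else 0 := by
  have base : ∀ (v' w' : Fin n) (p q : Fin N → Fin n),
      Z (a, p) (b, Function.update q j v') * (if w' = q j then 1 else 0)
        = (if v' = p j then 1 else 0) * Z (a, Function.update p j w') (b, q) := by
    intro v' w' p q
    have h := congrFun (congrFun (hZ (Matrix.single v' w' 1)) (a, p)) (b, q)
    rw [mul_sjK_apply, sjK_mul_apply] at h
    simp only [Matrix.single, Matrix.of_apply, ite_and, mul_ite, mul_zero, mul_one,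
      ite_mul, zero_mul, one_mul] at h
    simpa only [Finset.sum_ite_irrel, Finset.sum_const_zero, Finset.sum_ite_eq,
      Finset.sum_ite_eq', Finset.mem_univ, if_true, mul_ite, mul_zero, mul_one, ite_mul,
      zero_mul, one_mul] using h
  by_cases hvw : v = w
  · subst hvw
    rw [if_pos rfl]
    have h := base (p j) v p (Function.update q j v)
    simp only [Function.update_idem, Function.update_self, eq_self_iff_true, if_true, mul_one, one_mul] at h
    exact h.symm
  · rw [if_neg hvw]
    have h := base w w (Function.update p j v) (Function.update q j w)
    simp only [Function.update_idem, Function.update_self, eq_self_iff_true, if_true, mul_one, one_mul] at h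
    rw [h, if_neg (fun hh : w = v => hvw hh.symm), zero_mul]

end Aux6
section Aux7
variable {n N : ℕ}

lemma inv_pair_sum {S : Sq n} (hS : IsUnit (pt1 S)) (b c x y : Fin n) :
    (∑ a : Fin n, ∑ u : Fin n, rtil S (a, x) (b, u) * S (c, u) (a, y))
      = if b = c ∧ x = y then 1 else 0 := by
  have h1 : (pt1 S)⁻¹ * pt1 S = 1 :=
    Matrix.nonsing_inv_mul _ ((Matrix.isUnit_iff_isUnit_det _).mp hS)
  have h2 := congrFun (congrFun h1 (b, x)) (c, y)
  rw [Matrix.mul_apply, Fintype.sum_prod_type] at h2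
  rw [show ((1 : Sq n) (b, x) (c, y)) = if b = c ∧ x = y then 1 else 0 by
    rw [Matrix.one_apply]; simp [Prod.ext_iff]] at h2
  rw [← h2]
  rfl

lemma aux0J_mul_apply (j : Fin N) (S' : Sq n) (Z : BigM n N) (x : Fin n)
    (p : Fin N → Fin n) (y : Fin n × (Fin N → Fin n)) :
    (aux0J j S' * Z) (x, p) y
      = ∑ b, ∑ u, S' (x, p j) (b, u) * Z (b, Function.update p j u) y := by
  rw [Matrix.mul_apply, Fintype.sum_prod_type]
  simp only [aux0J, Matrix.of_apply, ite_mul, zero_mul]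
  simp only [sum_off j p, Function.update_self]

lemma mul_aux0J_apply (j : Fin N) (S' : Sq n) (Z : BigM n N) (y : Fin n)
    (q : Fin N → Fin n) (x : Fin n × (Fin N → Fin n)) :
    (Z * aux0J j S') x (y, q)
      = ∑ c, ∑ u, Z x (c, Function.update q j u) * S' (c, u) (y, q j) := by
  rw [Matrix.mul_apply, Fintype.sum_prod_type]
  simp only [aux0J, Matrix.of_apply, mul_ite, mul_zero]
  simp only [sum_off' j q, Function.update_self]

lemma key_step (j : Fin N) (S : Sq n) (hS : IsUnit (pt1 S)) (Z : BigM n N)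
    (hZ : offS j Z) :
    ptrA (aux0J j (rtil S) * Z * aux0J j S) = ptrA Z := by
  ext p q
  show (∑ a : Fin n, (aux0J j (rtil S) * Z * aux0J j S) (a, p) (a, q))
      = ∑ a : Fin n, Z (a, p) (a, q)
  have master : (∑ a : Fin n, (aux0J j (rtil S) * Z * aux0J j S) (a, p) (a, q))
      = if p j = q j then ∑ b : Fin n, Z (b, p) (b, Function.update q j (p j)) else 0 := by
    simp only [mul_assoc]
    simp only [aux0J_mul_apply j (rtil S)]
    simp only [mul_aux0J_apply j S]
    simp only [offS_entry hZ]
    simp only [Finset.mul_sum, Finset.sum_mul, ite_mul, zero_mul, mul_ite, mul_zero]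
    simp only [Finset.sum_ite_irrel, Finset.sum_const_zero, Finset.sum_ite_eq,
      Finset.sum_ite_eq', Finset.mem_univ, if_true]
    conv_lhs => enter [2, a, 2, b]; rw [Finset.sum_comm]
    conv_lhs => rw [Finset.sum_comm]
    conv_lhs => enter [2, b]; rw [Finset.sum_comm]
    have hfac : ∀ b c : Fin n, (∑ a : Fin n, ∑ u : Fin n,
        rtil S (a, p j) (b, u) * (Z (b, p) (c, Function.update q j (p j)) * S (c, u) (a, q j)))
        = Z (b, p) (c, Function.update q j (p j)) * (if b = c ∧ p j = q j then 1 else 0) := by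
      intro b c
      rw [← inv_pair_sum hS b c (p j) (q j), Finset.mul_sum]
      apply Finset.sum_congr rfl; intro a _
      rw [Finset.mul_sum]
      apply Finset.sum_congr rfl; intro u _
      ring
    simp only [hfac]
    simp only [mul_ite, mul_one, mul_zero, ite_and]
    simp only [Finset.sum_ite_irrel, Finset.sum_const_zero, Finset.sum_ite_eq,
      Finset.sum_ite_eq', Finset.mem_univ, if_true]
  rw [master]
  by_cases hpq : p j = q j
  · rw [if_pos hpq, hpq, Function.update_eq_self]
  · rw [if_neg hpq]
    symm
    have : ∀ a : Fin n, Z (a, p) (a, q) = 0 := by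
      intro a
      have h := offS_entry hZ a a p q (p j) (q j)
      rw [Function.update_eq_self, Function.update_eq_self, if_neg hpq] at h
      exact h
    simp [this]

end Aux7
section Aux8
variable {n N : ℕ}

lemma pasc_zero {G : Type*} [Monoid G] (f : Fin 0 → G) : pasc f = 1 := by
  simp [pasc]

lemma pdesc_zero {G : Type*} [Monoid G] (f : Fin 0 → G) : pdesc f = 1 := by
  simp [pdesc]

lemma pasc_succ {G : Type*} [Monoid G] {k : ℕ} (f : Fin (k + 1) → G) :
    pasc f = f 0 * pasc (fun i => f i.succ) := by
  simp [pasc, List.ofFn_succ]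

lemma pdesc_succ {G : Type*} [Monoid G] {k : ℕ} (f : Fin (k + 1) → G) :
    pdesc f = pdesc (fun i => f i.succ) * f 0 := by
  simp [pdesc, List.ofFn_succ]

lemma ptrA_smul (c : ℂ) (X : BigM n N) : ptrA (c • X) = c • ptrA X := by
  ext p q
  simp [ptrA, Finset.mul_sum]

lemma ptrA_aux0 (W : MatV n) : ptrA (aux0 (N := N) W) = Matrix.trace W • (1 : StM n N) := by
  ext p q
  simp only [ptrA, aux0, Matrix.of_apply, Matrix.smul_apply, Matrix.one_apply, smul_eq_mul]
  by_cases h : p = q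
  · simp [h, Matrix.trace]
  · simp [h]

lemma aux0J_inv {j : Fin N} {X : Sq n} (hX : IsUnit X) : (aux0J j X)⁻¹ = aux0J j X⁻¹ := by
  apply Matrix.inv_eq_right_inv
  rw [← aux0J_mul, Matrix.mul_nonsing_inv _ ((Matrix.isUnit_iff_isUnit_det _).mp hX), aux0J_one]

lemma aux0_isUnit {M : MatV n} (hM : IsUnit M) : IsUnit (aux0 (N := N) M) := by
  apply isUnit_of_right _ _ (aux0 M⁻¹)
  rw [← aux0_mul, Matrix.mul_nonsing_inv _ ((Matrix.isUnit_iff_isUnit_det _).mp hM), aux0_one]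

lemma aux0_inv {M : MatV n} (hM : IsUnit M) : (aux0 (N := N) M)⁻¹ = aux0 M⁻¹ := by
  apply Matrix.inv_eq_right_inv
  rw [← aux0_mul, Matrix.mul_nonsing_inv _ ((Matrix.isUnit_iff_isUnit_det _).mp hM), aux0_one]

lemma offS_pasc {j : Fin N} {k : ℕ} (f : Fin k → BigM n N) (h : ∀ i, offS j (f i)) :
    offS j (pasc f) := by
  apply offS_prod
  intro Z hZ
  rw [List.mem_ofFn] at hZ
  obtain ⟨i, rfl⟩ := hZ
  exact h i

lemma offS_pdesc {j : Fin N} {k : ℕ} (f : Fin k → BigM n N) (h : ∀ i, offS j (f i)) :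
    offS j (pdesc f) := by
  apply offS_prod
  intro Z hZ
  rw [List.mem_reverse, List.mem_ofFn] at hZ
  obtain ⟨i, rfl⟩ := hZ
  exact h i

lemma main_lemma (k : ℕ) (idx : Fin k → Fin N) (hinj : Function.Injective idx)
    (Rf : Fin k → Sq n) (hRf : ∀ i, IsUnit (pt1 (Rf i))) (W : MatV n) :
    ptrA (pasc (fun i => aux0J (idx i) (rtil (Rf i))) * aux0 W
      * pdesc (fun i => aux0J (idx i) (Rf i))) = Matrix.trace W • (1 : StM n N) := by
  induction k with
  | zero =>
    rw [pasc_zero, pdesc_zero, one_mul, mul_one, ptrA_aux0]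
  | succ k ih =>
    rw [pasc_succ, pdesc_succ]
    have hne : ∀ i : Fin k, idx i.succ ≠ idx 0 := by
      intro i h
      exact (Fin.succ_ne_zero i) (hinj h)
    have hmid : offS (idx 0)
        (pasc (fun i : Fin k => aux0J (idx i.succ) (rtil (Rf i.succ))) * aux0 W
          * pdesc (fun i : Fin k => aux0J (idx i.succ) (Rf i.succ))) := by
      apply offS_mul
      apply offS_mul
      · exact offS_pasc _ fun i => offS_aux0J (hne i) _
      · exact offS_aux0 W
      · exact offS_pdesc _ fun i => offS_aux0J (hne i) _
    have harr : aux0J (idx 0) (rtil (Rf 0)) * pasc (fun i : Fin k => aux0J (idx i.succ) (rtil (Rf i.succ)))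
          * aux0 W * (pdesc (fun i : Fin k => aux0J (idx i.succ) (Rf i.succ)) * aux0J (idx 0) (Rf 0))
        = aux0J (idx 0) (rtil (Rf 0))
          * (pasc (fun i : Fin k => aux0J (idx i.succ) (rtil (Rf i.succ))) * aux0 W
            * pdesc (fun i : Fin k => aux0J (idx i.succ) (Rf i.succ)))
          * aux0J (idx 0) (Rf 0) := by
      simp only [mul_assoc]
    rw [harr, key_step (idx 0) (Rf 0) (hRf 0) _ hmid]
    exact ih (fun i => idx i.succ) (fun a b h => Fin.succ_injective _ (hinj h))
      (fun i => Rf i.succ) (fun i => hRf i.succ)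

end Aux8
section Aux9
variable {n N : ℕ}

lemma pasc_conj {k : ℕ} (A B : BigM n N) (h : B * A = 1) (c : Fin k → ℂ)
    (f : Fin k → BigM n N) :
    pasc (fun i => c i • (A * (f i * B))) = (∏ i, c i) • (A * (pasc f * B)) := by
  induction k with
  | zero =>
    rw [pasc_zero, pasc_zero, Finset.univ_eq_empty, Finset.prod_empty, one_smul, one_mul]
    exact (mul_eq_one_comm.mp h).symm
  | succ k ih =>
    rw [pasc_succ, pasc_succ f, ih (fun i => c i.succ) (fun i => f i.succ)]
    rw [smul_mul_assoc, mul_smul_comm, smul_smul, Fin.prod_univ_succ]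
    congr 1
    calc (A * (f 0 * B)) * (A * (pasc (fun i => f i.succ) * B))
        = A * (f 0 * ((B * A) * (pasc (fun i => f i.succ) * B))) := by simp only [mul_assoc]
      _ = A * ((f 0 * pasc (fun i => f i.succ)) * B) := by rw [h, one_mul]; simp only [mul_assoc]

lemma Tbdy_prop (R : ℂ → Sq n) (Kpr Km : ℂ → MatV n) (M : MatV n) (r : ℂ) (z : Fin N → ℂ)
    (hRinv : ∀ x : ℂ, IsUnit (R x)) (hRt1 : ∀ x : ℂ, IsUnit (pt1 (R x))) (hM : IsUnit M)
    (hcross : ∀ x : ℂ, ∃ c : ℂ, c ≠ 0 ∧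
      (k2M M)⁻¹ * (R (r ^ 2 * x))⁻¹ * k2M M = c • rtil (R x))
    (hRMM : ∀ x : ℂ, R x * (M ⊗ₖ M) = (M ⊗ₖ M) * R x)
    (x : ℂ) (hx : ∀ i, (x * z i)⁻¹ = r ^ 2 * (x / z i))
    (hK : ∃ c : ℂ, c ≠ 0 ∧ Kpr x = c • M) :
    ∃ c : ℂ, c ≠ 0 ∧
      Tbdy R Kpr Km z x = c • (Matrix.trace (Km x * M) • (1 : StM n N)) := by
  classical
  obtain ⟨cK, hcK0, hKpr⟩ := hK
  choose cc hcc0 hcrossEq using hcross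
  have hMd := (Matrix.isUnit_iff_isUnit_det _).mp hM
  have hMMi : aux0 (N := N) M * aux0 M⁻¹ = 1 := by
    rw [← aux0_mul, Matrix.mul_nonsing_inv _ hMd, aux0_one]
  have hk2u : k2M M * (k2M M)⁻¹ = 1 := by
    rw [k2M_inv hM, ← k2M_mul, Matrix.mul_nonsing_inv _ hMd, k2M_one]
  have hterm : ∀ i : Fin N, (aux0J i (R ((x * z i)⁻¹)))⁻¹
      = cc (x / z i) • (aux0 M⁻¹ * (aux0J i (rtil (R (x / z i))) * aux0 M)) := by
    intro i
    have hcomm_i : R (x / z i) * (k1M M * k2M M) = (k1M M * k2M M) * R (x / z i) := by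
      rw [← kron_eq_k1M_mul_k2M]; exact hRMM _
    have hinv : (R (r ^ 2 * (x / z i)))⁻¹
        = cc (x / z i) • (k1M M⁻¹ * (rtil (R (x / z i)) * k1M M)) := by
      calc (R (r ^ 2 * (x / z i)))⁻¹
          = (k2M M * (k2M M)⁻¹) * (R (r ^ 2 * (x / z i)))⁻¹ * (k2M M * (k2M M)⁻¹) := by
            rw [hk2u, one_mul, mul_one]
        _ = k2M M * ((k2M M)⁻¹ * (R (r ^ 2 * (x / z i)))⁻¹ * k2M M) * (k2M M)⁻¹ := by
            simp only [mul_assoc]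
        _ = k2M M * (cc (x / z i) • rtil (R (x / z i))) * (k2M M)⁻¹ := by
            rw [hcrossEq (x / z i)]
        _ = cc (x / z i) • (k2M M * rtil (R (x / z i)) * (k2M M)⁻¹) := by
            rw [mul_smul_comm, smul_mul_assoc]
        _ = cc (x / z i) • (k1M M⁻¹ * (rtil (R (x / z i)) * k1M M)) := by
            rw [conj_switch M hM _ hcomm_i]
    rw [hx i, aux0J_inv (hRinv _), hinv, aux0J_smul, aux0J_mul, aux0J_mul, aux0J_k1M, aux0J_k1M]
  have hpasc : pasc (fun i : Fin N => (aux0J i (R ((x * z i)⁻¹)))⁻¹)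
      = (∏ i : Fin N, cc (x / z i))
        • (aux0 M⁻¹ * (pasc (fun i : Fin N => aux0J i (rtil (R (x / z i)))) * aux0 M)) := by
    rw [show (fun i : Fin N => (aux0J i (R ((x * z i)⁻¹)))⁻¹)
        = fun i : Fin N => cc (x / z i)
          • (aux0 M⁻¹ * (aux0J i (rtil (R (x / z i))) * aux0 M)) from funext hterm]
    exact pasc_conj _ _ hMMi _ _
  refine ⟨cK * ∏ i : Fin N, cc (x / z i),
    mul_ne_zero hcK0 (Finset.prod_ne_zero_iff.mpr fun i _ => hcc0 _), ?_⟩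
  rw [Tbdy, hpasc, hKpr, aux0_smul]
  rw [smul_mul_assoc, mul_smul_comm, smul_smul, smul_mul_assoc, smul_mul_assoc, ptrA_smul]
  have hinner : aux0 M * (aux0 M⁻¹
        * (pasc (fun i : Fin N => aux0J i (rtil (R (x / z i)))) * aux0 M))
        * aux0 (Km x) * pdesc (fun i : Fin N => aux0J i (R (x / z i)))
      = pasc (fun i : Fin N => aux0J i (rtil (R (x / z i)))) * aux0 (M * Km x)
        * pdesc (fun i : Fin N => aux0J i (R (x / z i))) := by
    rw [aux0_mul]
    simp only [mul_assoc]
    rw [← mul_assoc (aux0 M) (aux0 M⁻¹), hMMi, one_mul]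
  rw [hinner]
  have hm := main_lemma (n := n) (N := N) N (fun i => i) (fun a b h => h)
    (fun i => R (x / z i)) (fun i => hRt1 _) (M * Km x)
  rw [hm, Matrix.trace_mul_comm]

end Aux9
/-- under crossing symmetry and `K'(±r⁻¹) ∝ M`, the boundary transfer matrix at
`x = ±r⁻¹` is proportional to `Tr(K⁻(±r⁻¹) M) · Id`. -/
theorem stmt17 (n N : ℕ) (R : ℂ → Sq n) (Kpr Km : ℂ → MatV n) (M : MatV n) (r : ℂ)
    (z : Fin N → ℂ)
    (hRinv : ∀ x : ℂ, IsUnit (R x))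
    (hRt1 : ∀ x : ℂ, IsUnit (pt1 (R x)))
    (hM : IsUnit M)
    (hr : r ≠ 0)
    (hz : ∀ i, z i ≠ 0)
    (hcross : ∀ x : ℂ, ∃ c : ℂ, c ≠ 0 ∧
      (k2M M)⁻¹ * (R (r ^ 2 * x))⁻¹ * k2M M = c • rtil (R x))
    (hRMM : ∀ x : ℂ, R x * (M ⊗ₖ M) = (M ⊗ₖ M) * R x)
    (hK1 : ∃ c : ℂ, c ≠ 0 ∧ Kpr r⁻¹ = c • M)
    (hK2 : ∃ c : ℂ, c ≠ 0 ∧ Kpr (-r⁻¹) = c • M) :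
    (∃ c : ℂ, c ≠ 0 ∧
      Tbdy R Kpr Km z r⁻¹ = c • (Matrix.trace (Km r⁻¹ * M) • (1 : StM n N))) ∧
    (∃ c : ℂ, c ≠ 0 ∧
      Tbdy R Kpr Km z (-r⁻¹) = c • (Matrix.trace (Km (-r⁻¹) * M) • (1 : StM n N))) := by
  constructor
  · exact Tbdy_prop R Kpr Km M r z hRinv hRt1 hM hcross hRMM r⁻¹
      (fun i => by field_simp [hz i]) hK1
  · exact Tbdy_prop R Kpr Km M r z hRinv hRt1 hM hcross hRMM (-r⁻¹)
      (fun i => by field_simp [hz i]) hK2
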